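/- Let Q_1, ..., Q_n ∈ ℝ^k, let w ∈ ℂ^n, let I_w = {j : w_j ≠ 0}, and let σ ∈ ℝ^k. Suppose σ = Σ_{j ∈ I_w} λ^j Q_j with all λ^j > 0. Then there exists t ∈ ℝ^k such that Σ_{j ∈ I_w} Q_j · |w_j|² · e^{2⟨Q_j, t⟩} = σ; that is, the (ℂ*)^k-orbit of w under the action with weights Q_j meets the zero level set of the moment map ν(z) = -(i/2)(Σ_j Q_j|z_j|² - σ). -/

import Mathlib

set_option maxHeartbeats 1000000

theorem stmt_12 {k n : ℕ} (Q : Fin n → EuclideanSpace ℝ (Fin k))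
    (w : Fin n → ℂ) (σ : EuclideanSpace ℝ (Fin k)) (lam : Fin n → ℝ)
    (hpos : ∀ j, w j ≠ 0 → 0 < lam j) (hzero : ∀ j, w j = 0 → lam j = 0)
    (hσ : σ = ∑ j, lam j • Q j) :
    ∃ t : EuclideanSpace ℝ (Fin k),
      ∑ j, (‖w j‖ ^ 2 * Real.exp (2 * (inner ℝ (Q j) t : ℝ))) • Q j = σ := by
  classical
  by_cases hJ : ∃ j, w j ≠ 0
  case neg =>
    push_neg at hJ
    refine ⟨0, ?_⟩
    have h1 : ∀ j, ‖w j‖ ^ 2 * Real.exp (2 * (inner ℝ (Q j) (0:EuclideanSpace ℝ (Fin k)) : ℝ)) = 0 := by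
      intro j; simp [hJ j]
    rw [hσ]
    refine Finset.sum_congr rfl fun j _ => ?_
    rw [h1 j, hzero j (hJ j)]
  case pos =>
  haveI : Nonempty (Fin n) := ⟨hJ.choose⟩
  set V : Submodule ℝ (EuclideanSpace ℝ (Fin k)) := Submodule.span ℝ (Q '' {j | w j ≠ 0}) with hV
  have hQV : ∀ j, w j ≠ 0 → Q j ∈ V := fun j hj =>
    Submodule.subset_span ⟨j, hj, rfl⟩
  have hσV : σ ∈ V := by
    rw [hσ]
    refine Submodule.sum_mem _ fun j _ => ?_
    by_cases hj : w j = 0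
    · rw [hzero j hj]; simp
    · exact Submodule.smul_mem _ _ (hQV j hj)
  set cj : Fin n → ℝ := fun j => ‖w j‖ ^ 2 with hcj
  have hcj0 : ∀ j, 0 ≤ cj j := fun j => by positivity
  have hcjpos : ∀ j, w j ≠ 0 → 0 < cj j := fun j hj => by
    have := norm_pos_iff.mpr hj; positivity
  set F : ↥V → ℝ := fun t =>
    (∑ j, cj j * Real.exp (2 * (inner ℝ (Q j) (t : EuclideanSpace ℝ (Fin k)) : ℝ)))
      - 2 * (inner ℝ σ (t : EuclideanSpace ℝ (Fin k)) : ℝ) with hF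
  have hic : ∀ x : EuclideanSpace ℝ (Fin k),
      Continuous fun t : ↥V => (inner ℝ x (t : EuclideanSpace ℝ (Fin k)) : ℝ) :=
    fun x => continuous_const.inner continuous_subtype_val
  have hFcont : Continuous F := by
    rw [hF]
    refine Continuous.sub (continuous_finset_sum _ fun j _ => ?_)
      (continuous_const.mul (hic σ))
    exact continuous_const.mul (Real.continuous_exp.comp (continuous_const.mul (hic (Q j))))
  -- existence of minimizer
  obtain ⟨t₀, ht₀⟩ : ∃ t₀ : ↥V, ∀ t, F t₀ ≤ F t := by
    by_cases htriv : ∀ x : ↥V, x = 0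
    · exact ⟨0, fun t => by rw [htriv t]⟩
    push_neg at htriv
    obtain ⟨x, hx⟩ := htriv
    have hx' : ‖x‖ ≠ 0 := by simpa using hx
    have hsph : (‖x‖⁻¹ • x : ↥V) ∈ Metric.sphere (0 : ↥V) 1 := by
      rw [mem_sphere_zero_iff_norm, norm_smul, norm_inv, norm_norm]
      exact inv_mul_cancel₀ hx'
    set g : ↥V → ℝ := fun u => max (-(inner ℝ σ (u : EuclideanSpace ℝ (Fin k)) : ℝ))
        (∑ j, if w j = 0 then 0
          else max ((inner ℝ (Q j) (u : EuclideanSpace ℝ (Fin k)) : ℝ)) 0) with hg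
    have hgcont : Continuous g := by
      refine Continuous.max (hic σ).neg (continuous_finset_sum _ fun j _ => ?_)
      by_cases hj : w j = 0
      · simp only [hj, if_true]; exact continuous_const
      · simp only [hj, if_false]; exact (hic (Q j)).max continuous_const
    obtain ⟨u₁, hu₁s, hu₁min⟩ := (isCompact_sphere (0 : ↥V) 1).exists_isMinOn
      ⟨_, hsph⟩ hgcont.continuousOn
    rw [isMinOn_iff] at hu₁min
    set c := g u₁ with hc
    have hu₁n : ‖u₁‖ = 1 := mem_sphere_zero_iff_norm.mp hu₁s
    have hcpos : 0 < c := by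
      by_contra hcp
      push_neg at hcp
      have hs1 : -(inner ℝ σ (u₁ : EuclideanSpace ℝ (Fin k)) : ℝ) ≤ 0 :=
        le_trans (le_max_left _ _) hcp
      have hs2 : (∑ j, if w j = 0 then 0
          else max ((inner ℝ (Q j) (u₁ : EuclideanSpace ℝ (Fin k)) : ℝ)) 0) ≤ 0 :=
        le_trans (le_max_right _ _) hcp
      have hterm : ∀ j, 0 ≤ (if w j = 0 then 0
          else max ((inner ℝ (Q j) (u₁ : EuclideanSpace ℝ (Fin k)) : ℝ)) 0) := by
        intro j; by_cases hj : w j = 0 <;> simp [hj]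
      have hsum0 : (∑ j, if w j = 0 then 0
          else max ((inner ℝ (Q j) (u₁ : EuclideanSpace ℝ (Fin k)) : ℝ)) 0) = 0 :=
        le_antisymm hs2 (Finset.sum_nonneg fun j _ => hterm j)
      have hQle : ∀ j, w j ≠ 0 → (inner ℝ (Q j) (u₁ : EuclideanSpace ℝ (Fin k)) : ℝ) ≤ 0 := by
        intro j hj
        have := (Finset.sum_eq_zero_iff_of_nonneg (fun j _ => hterm j)).mp hsum0 j
          (Finset.mem_univ j)
        simp only [hj, if_false] at this
        calc (inner ℝ (Q j) (u₁ : EuclideanSpace ℝ (Fin k)) : ℝ)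
            ≤ max ((inner ℝ (Q j) (u₁ : EuclideanSpace ℝ (Fin k)) : ℝ)) 0 := le_max_left _ _
          _ = 0 := this
      have hinsum : (inner ℝ σ (u₁ : EuclideanSpace ℝ (Fin k)) : ℝ)
          = ∑ j, lam j * (inner ℝ (Q j) (u₁ : EuclideanSpace ℝ (Fin k)) : ℝ) := by
        rw [hσ, sum_inner]
        exact Finset.sum_congr rfl fun j _ => real_inner_smul_left _ _ _
      have hterm2 : ∀ j ∈ Finset.univ,
          lam j * (inner ℝ (Q j) (u₁ : EuclideanSpace ℝ (Fin k)) : ℝ) ≤ 0 := by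
        intro j _
        by_cases hj : w j = 0
        · rw [hzero j hj]; simp
        · exact mul_nonpos_of_nonneg_of_nonpos (hpos j hj).le (hQle j hj)
      have hsum2 : ∑ j, lam j * (inner ℝ (Q j) (u₁ : EuclideanSpace ℝ (Fin k)) : ℝ) = 0 := by
        refine le_antisymm (Finset.sum_nonpos hterm2) ?_
        rw [← hinsum]; linarith
      have hQ0 : ∀ j, w j ≠ 0 → (inner ℝ (Q j) (u₁ : EuclideanSpace ℝ (Fin k)) : ℝ) = 0 := by
        intro j hj
        have h0 := (Finset.sum_eq_zero_iff_of_nonpos hterm2).mp hsum2 j (Finset.mem_univ j)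
        have := hpos j hj
        rcases mul_eq_zero.mp h0 with h | h
        · exact absurd h (ne_of_gt this)
        · exact h
      have horth : ∀ v ∈ V, (inner ℝ v (u₁ : EuclideanSpace ℝ (Fin k)) : ℝ) = 0 := by
        intro v hv
        rw [hV] at hv
        induction hv using Submodule.span_induction with
        | mem y hy =>
          obtain ⟨j, hj, rfl⟩ := hy
          exact hQ0 j hj
        | zero => simp
        | add y z _ _ hy hz => rw [inner_add_left, hy, hz]; ring
        | smul a y _ hy => rw [real_inner_smul_left, hy]; ring
      have : (inner ℝ (u₁ : EuclideanSpace ℝ (Fin k)) (u₁ : EuclideanSpace ℝ (Fin k)) : ℝ) = 0 :=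
        horth _ u₁.2
      have hu0 : (u₁ : EuclideanSpace ℝ (Fin k)) = 0 := inner_self_eq_zero.mp this
      have h1 : ‖u₁‖ = 0 := by
        rw [show ‖u₁‖ = ‖(u₁ : EuclideanSpace ℝ (Fin k))‖ from rfl, hu0, norm_zero]
      rw [hu₁n] at h1; norm_num at h1
    -- constants
    have hn : (0 : ℝ) < n := by
      obtain ⟨j, _⟩ := hJ
      exact_mod_cast j.pos
    set c' : ℝ := c / n with hc'
    have hc'pos : 0 < c' := div_pos hcpos hn
    have hn1 : (1 : ℝ) ≤ n := by
      obtain ⟨j, _⟩ := hJ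
      exact_mod_cast j.pos
    have hc'le : c' ≤ c := div_le_self hcpos.le hn1
    set Jf : Finset (Fin n) := Finset.univ.filter (fun j => w j ≠ 0) with hJfdef
    have hJf : Jf.Nonempty := by
      obtain ⟨j, hj⟩ := hJ
      exact ⟨j, by simp [hJfdef, hj]⟩
    set m : ℝ := Jf.inf' hJf cj with hm
    have hmpos : 0 < m := by
      rw [hm, Finset.lt_inf'_iff]
      intro j hj
      exact hcjpos j (by simpa [hJfdef] using hj)
    have hmle : ∀ j, w j ≠ 0 → m ≤ cj j := fun j hj =>
      Finset.inf'_le cj (by simp [hJfdef, hj])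
    have hq : ∀ y : ℝ, 0 ≤ y → y ^ 2 ≤ Real.exp (2 * y) := by
      intro y hy
      have h1 : y ≤ Real.exp y := by linarith [Real.add_one_le_exp y]
      have h2 : Real.exp (2 * y) = Real.exp y * Real.exp y := by
        rw [two_mul, Real.exp_add]
      nlinarith [Real.exp_pos y]
    have hprop : Filter.Tendsto F (Filter.cocompact ↥V) Filter.atTop := by
      rw [Filter.tendsto_atTop]
      intro Mb
      rw [Filter.eventually_iff]
      set R : ℝ := max 1 (max (Mb / (2 * c')) ((max Mb 0 + 2 * ‖σ‖ + 1) / (m * c' ^ 2))) with hR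
      refine Filter.mem_cocompact.mpr ⟨Metric.closedBall 0 R,
        isCompact_closedBall _ _, fun t ht => ?_⟩
      simp only [Set.mem_compl_iff, Metric.mem_closedBall, dist_zero_right, not_le] at ht
      show Mb ≤ F t
      have hR1 : (1 : ℝ) ≤ R := le_max_left _ _
      have htn : 0 < ‖t‖ := lt_of_lt_of_le one_pos (le_trans hR1 ht.le)
      have ht0 : t ≠ 0 := fun h => by rw [h, norm_zero] at htn; exact lt_irrefl 0 htn
      set u : ↥V := ‖t‖⁻¹ • t with hu
      have hus : u ∈ Metric.sphere (0 : ↥V) 1 := by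
        rw [mem_sphere_zero_iff_norm, hu, norm_smul, norm_inv, norm_norm]
        exact inv_mul_cancel₀ (ne_of_gt htn)
      have hcu : c ≤ g u := hu₁min u hus
      have hut : (t : EuclideanSpace ℝ (Fin k)) = ‖t‖ • (u : EuclideanSpace ℝ (Fin k)) := by
        rw [hu, Submodule.coe_smul, smul_smul, mul_inv_cancel₀ (ne_of_gt htn), one_smul]
      have hFsum_nonneg : 0 ≤ ∑ j, cj j * Real.exp
          (2 * (inner ℝ (Q j) (t : EuclideanSpace ℝ (Fin k)) : ℝ)) :=
        Finset.sum_nonneg fun j _ => mul_nonneg (hcj0 j) (Real.exp_pos _).le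
      rw [hg] at hcu
      rcases le_max_iff.mp hcu with hcase | hcase
      · -- case B : -⟨σ, u⟩ ≥ c
        have hσt : -(inner ℝ σ (t : EuclideanSpace ℝ (Fin k)) : ℝ) ≥ ‖t‖ * c := by
          rw [hut, real_inner_smul_right]
          have := mul_le_mul_of_nonneg_left hcase htn.le
          linarith [this]
        have hFt : 2 * c' * ‖t‖ ≤ F t := by
          simp only [hF]
          have h2 : 2 * c' * ‖t‖ ≤ 2 * c * ‖t‖ := by nlinarith
          linarith [hFsum_nonneg, hσt]
        have hRge : Mb / (2 * c') ≤ R := le_trans (le_max_left _ _) (le_max_right _ _)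
        have : Mb ≤ 2 * c' * ‖t‖ := by
          rw [div_le_iff₀ (by positivity)] at hRge
          nlinarith
        linarith [hFt]
      · -- case A : some j with ⟨Q j, u⟩ ≥ c'
        have hex : ∃ j, c' ≤ (if w j = 0 then 0
            else max ((inner ℝ (Q j) (u : EuclideanSpace ℝ (Fin k)) : ℝ)) 0) := by
          by_contra hno
          push_neg at hno
          have hlt : (∑ j, if w j = 0 then 0
              else max ((inner ℝ (Q j) (u : EuclideanSpace ℝ (Fin k)) : ℝ)) 0)
              < ∑ _j : Fin n, c' :=
            Finset.sum_lt_sum_of_nonempty Finset.univ_nonempty fun j _ => hno j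
          rw [Finset.sum_const, Finset.card_univ, Fintype.card_fin, nsmul_eq_mul, hc',
            mul_div_cancel₀ _ (ne_of_gt hn)] at hlt
          linarith
        obtain ⟨j, hjc⟩ := hex
        have hwj : w j ≠ 0 := by
          intro hwj0
          rw [if_pos hwj0] at hjc
          linarith
        rw [if_neg hwj] at hjc
        have hju : c' ≤ (inner ℝ (Q j) (u : EuclideanSpace ℝ (Fin k)) : ℝ) := by
          rcases le_max_iff.mp hjc with h | h
          · exact h
          · linarith
        have hjt : c' * ‖t‖ ≤ (inner ℝ (Q j) (t : EuclideanSpace ℝ (Fin k)) : ℝ) := by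
          rw [hut, real_inner_smul_right]
          nlinarith
        have hexp : (c' * ‖t‖) ^ 2 ≤ Real.exp
            (2 * (inner ℝ (Q j) (t : EuclideanSpace ℝ (Fin k)) : ℝ)) := by
          refine le_trans (hq (c' * ‖t‖) (by positivity)) (Real.exp_le_exp.mpr ?_)
          nlinarith
        have hsingle : cj j * Real.exp (2 * (inner ℝ (Q j) (t : EuclideanSpace ℝ (Fin k)) : ℝ))
            ≤ ∑ i, cj i * Real.exp (2 * (inner ℝ (Q i) (t : EuclideanSpace ℝ (Fin k)) : ℝ)) :=
          Finset.single_le_sum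
            (f := fun i => cj i * Real.exp (2 * (inner ℝ (Q i) (t : EuclideanSpace ℝ (Fin k)) : ℝ)))
            (fun i _ => mul_nonneg (hcj0 i) (Real.exp_pos _).le) (Finset.mem_univ j)
        have hσbound : (inner ℝ σ (t : EuclideanSpace ℝ (Fin k)) : ℝ) ≤ ‖σ‖ * ‖t‖ := by
          have h := real_inner_le_norm σ (t : EuclideanSpace ℝ (Fin k))
          rwa [← Submodule.coe_norm] at h
        have hFt : m * (c' * ‖t‖) ^ 2 - 2 * (‖σ‖ * ‖t‖) ≤ F t := by
          simp only [hF]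
          have h1 : m * (c' * ‖t‖) ^ 2 ≤ cj j * Real.exp
              (2 * (inner ℝ (Q j) (t : EuclideanSpace ℝ (Fin k)) : ℝ)) := by
            have := hmle j hwj
            nlinarith [Real.exp_pos (2 * (inner ℝ (Q j) (t : EuclideanSpace ℝ (Fin k)) : ℝ))]
          have h2 := le_trans h1 hsingle
          linarith [hσbound]
        have hRge : (max Mb 0 + 2 * ‖σ‖ + 1) / (m * c' ^ 2) ≤ R :=
          le_trans (le_max_right _ _) (le_max_right _ _)
        rw [div_le_iff₀ (by positivity)] at hRge
        have hkey2 : max Mb 0 + 2 * ‖σ‖ + 1 ≤ m * c' ^ 2 * ‖t‖ := by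
          nlinarith [mul_le_mul_of_nonneg_right ht.le
            (show (0:ℝ) ≤ m * c' ^ 2 by positivity)]
        have : Mb ≤ m * (c' * ‖t‖) ^ 2 - 2 * (‖σ‖ * ‖t‖) := by
          have hMb : Mb ≤ max Mb 0 := le_max_left _ _
          have h0 : (0:ℝ) ≤ max Mb 0 := le_max_right _ _
          have hn1 : 1 ≤ ‖t‖ := le_trans hR1 ht.le
          nlinarith
        linarith [hFt]
    haveI : Nonempty ↥V := ⟨0⟩
    exact hFcont.exists_forall_le hprop
  -- first-order condition
  have hkey : ∀ v : ↥V,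
      ∑ j, cj j * Real.exp (2 * (inner ℝ (Q j) (t₀ : EuclideanSpace ℝ (Fin k)) : ℝ))
          * (inner ℝ (Q j) (v : EuclideanSpace ℝ (Fin k)) : ℝ)
        = (inner ℝ σ (v : EuclideanSpace ℝ (Fin k)) : ℝ) := by
    intro v
    set A : Fin n → ℝ := fun j => (inner ℝ (Q j) (t₀ : EuclideanSpace ℝ (Fin k)) : ℝ) with hA
    set B : Fin n → ℝ := fun j => (inner ℝ (Q j) (v : EuclideanSpace ℝ (Fin k)) : ℝ) with hB
    set Aσ : ℝ := (inner ℝ σ (t₀ : EuclideanSpace ℝ (Fin k)) : ℝ) with hAσ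
    set Bσ : ℝ := (inner ℝ σ (v : EuclideanSpace ℝ (Fin k)) : ℝ) with hBσ
    set φ : ℝ → ℝ := fun s => F (t₀ + s • v) with hφ
    have hφeq : φ = fun s => (∑ j, cj j * Real.exp (2 * (A j + s * B j))) - 2 * (Aσ + s * Bσ) := by
      funext s
      simp only [hφ, hF]
      have hco : ((t₀ + s • v : ↥V) : EuclideanSpace ℝ (Fin k))
          = (t₀ : EuclideanSpace ℝ (Fin k)) + s • (v : EuclideanSpace ℝ (Fin k)) := by
        push_cast
        rfl
      rw [hco]
      congr 1
      · refine Finset.sum_congr rfl fun j _ => ?_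
        rw [inner_add_right, real_inner_smul_right]
      · rw [inner_add_right, real_inner_smul_right]
    have hmin0 : IsLocalMin φ 0 :=
      Filter.Eventually.of_forall fun s => by
        simp only [hφ]
        have h0 : t₀ + (0:ℝ) • v = t₀ := by simp
        rw [h0]
        exact ht₀ (t₀ + s • v)
    have hder : HasDerivAt φ
        ((∑ j, cj j * (Real.exp (2 * (A j + 0 * B j)) * (2 * (1 * B j)))) - 2 * (1 * Bσ)) 0 := by
      rw [hφeq]
      refine HasDerivAt.sub (HasDerivAt.fun_sum fun j _ => ?_) ?_
      · have h1 : HasDerivAt (fun s : ℝ => 2 * (A j + s * B j)) (2 * (1 * B j)) 0 :=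
          (((hasDerivAt_id (0:ℝ)).mul_const (B j)).const_add (A j)).const_mul 2
        exact h1.exp.const_mul (cj j)
      · exact (((hasDerivAt_id (0:ℝ)).mul_const Bσ).const_add Aσ).const_mul 2
    have h0 := hmin0.hasDerivAt_eq_zero hder
    have h1 : (∑ j, cj j * (Real.exp (2 * (A j + 0 * B j)) * (2 * (1 * B j))))
        = 2 * ∑ j, cj j * Real.exp (2 * A j) * B j := by
      rw [Finset.mul_sum]
      refine Finset.sum_congr rfl fun j _ => ?_
      rw [show 2 * (A j + 0 * B j) = 2 * A j by ring]
      ring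
    rw [h1] at h0
    have : ∑ j, cj j * Real.exp (2 * A j) * B j = Bσ := by linarith
    exact this
  -- conclusion
  refine ⟨(t₀ : EuclideanSpace ℝ (Fin k)), ?_⟩
  set D : EuclideanSpace ℝ (Fin k) :=
    (∑ j, (cj j * Real.exp (2 * (inner ℝ (Q j) (t₀ : EuclideanSpace ℝ (Fin k)) : ℝ))) • Q j) - σ with hD
  have hDV : D ∈ V := by
    refine sub_mem (Submodule.sum_mem _ fun j _ => ?_) hσV
    by_cases hj : w j = 0
    · have : cj j = 0 := by simp [hcj, hj]
      rw [this]; simp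
    · exact Submodule.smul_mem _ _ (hQV j hj)
  have hDzero : D = 0 := by
    have h := hkey ⟨D, hDV⟩
    have h2 : (inner ℝ D D : ℝ) = 0 := by
      have : (inner ℝ D D : ℝ)
          = ∑ j, cj j * Real.exp (2 * (inner ℝ (Q j) (t₀ : EuclideanSpace ℝ (Fin k)) : ℝ))
              * (inner ℝ (Q j) D : ℝ) - (inner ℝ σ D : ℝ) := by
        rw [hD, inner_sub_left, sum_inner]
        congr 1
        refine Finset.sum_congr rfl fun j _ => ?_
        rw [real_inner_smul_left]
      rw [this]
      rw [show (inner ℝ σ D : ℝ) = (inner ℝ σ ((⟨D, hDV⟩ : ↥V) : EuclideanSpace ℝ (Fin k)) : ℝ) from rfl, ← h]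
      simp
    exact inner_self_eq_zero.mp h2
  have := sub_eq_zero.mp hDzero
  simpa [hcj] using this
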